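/- arXiv:1610.00581 — 8 statements merged into one kernel-verified Lean document; each statement's English description precedes it below -/
import Mathlib

section
/- Let G be a connected undirected graph whose edges are given an arbitrary orientation, and let H be the ancillary graph obtained by replacing each vertex v of G with three copies v_0, v_1, v_2 and each oriented edge (u,v) of G with the three edges (u_0,v_1), (u_1,v_2), (u_2,v_0). If G contains a cycle in which the number p of edges oriented in the direction of traversal and the number q of edges oriented against it satisfy p - q ≢ 0 (mod 3), then for every vertex k of G and every pair b ≠ b' in {0,1,2}, the vertices k_b and k_{b'} are connected by a path in H. -/
/-- The ancillary triple-cover graph `H`: vertices are `V × ZMod 3`, and each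
oriented edge `u → v` of the base graph (given by `dir`) yields the edges
`(u_b, v_{b+1})` for `b ∈ ZMod 3`. -/
def ancillary3 {V : Type} (dir : V → V → Prop) : SimpleGraph (V × ZMod 3) where
  Adj a b := (dir a.1 b.1 ∧ b.2 = a.2 + 1) ∨ (dir b.1 a.1 ∧ a.2 = b.2 + 1)
  symm := by
    constructor
    rintro a b (⟨h1, h2⟩ | ⟨h1, h2⟩)
    · exact Or.inr ⟨h1, h2⟩
    · exact Or.inl ⟨h1, h2⟩
  loopless := by
    constructor
    rintro a (⟨-, h⟩ | ⟨-, h⟩) <;> simp at h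

section aux

variable {V : Type} (dir : V → V → Prop)

lemma anc_adj_fwd {u v : V} (h : dir u v) (b : ZMod 3) :
    (ancillary3 dir).Adj (u, b) (v, b + 1) := Or.inl ⟨h, rfl⟩

lemma anc_adj_bwd {u v : V} (h : dir v u) (b : ZMod 3) :
    (ancillary3 dir).Adj (u, b) (v, b - 1) := Or.inr ⟨h, by ring⟩

/-- The shift-by-`t` graph homomorphism of the ancillary graph. -/
def ancShift (t : ZMod 3) : ancillary3 dir →g ancillary3 dir where
  toFun := fun a => (a.1, a.2 + t)
  map_rel' := by
    rintro a b (⟨h1, h2⟩ | ⟨h1, h2⟩)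
    · exact Or.inl ⟨h1, by simp [h2]; ring⟩
    · exact Or.inr ⟨h1, by simp [h2]; ring⟩

lemma anc_shift {u v : V} {b b' : ZMod 3} (t : ZMod 3)
    (h : (ancillary3 dir).Reachable (u, b) (v, b')) :
    (ancillary3 dir).Reachable (u, b + t) (v, b' + t) :=
  h.map (ancShift dir t)

lemma anc_reach_walk {G : SimpleGraph V}
    (horient : ∀ u v, G.Adj u v ↔ (dir u v ∨ dir v u))
    {u v : V} (w : G.Walk u v) :
    ∃ δ, (ancillary3 dir).Reachable (u, 0) (v, δ) := by
  induction w with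
  | nil => exact ⟨0, SimpleGraph.Reachable.refl _⟩
  | @cons a x v h w ih =>
    obtain ⟨δ, hr⟩ := ih
    rcases (horient _ _).1 h with hd | hd
    · refine ⟨δ + 1, ((anc_adj_fwd dir hd 0).reachable).trans ?_⟩
      simpa using anc_shift dir 1 hr
    · refine ⟨δ - 1, ((anc_adj_bwd dir hd 0).reachable).trans ?_⟩
      simpa [sub_eq_add_neg] using anc_shift dir (-1) hr

lemma anc_cycle_reach [DecidableRel dir] {n : ℕ} [NeZero n] (c : ZMod n → V)
    (hdir : ∀ i : ZMod n, dir (c i) (c (i + 1)) ∨ dir (c (i + 1)) (c i))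
    (hone : ∀ u v, ¬ (dir u v ∧ dir v u)) (m : ℕ) :
    (ancillary3 dir).Reachable (c 0, 0)
      (c (m : ZMod n), ∑ i ∈ Finset.range m,
        if dir (c (i : ZMod n)) (c ((i : ZMod n) + 1)) then (1 : ZMod 3) else -1) := by
  induction m with
  | zero =>
    simp only [Nat.cast_zero, Finset.range_zero, Finset.sum_empty]
    exact SimpleGraph.Reachable.refl _
  | succ m ih =>
    rw [Finset.sum_range_succ]
    refine ih.trans ?_
    have hcast : ((m + 1 : ℕ) : ZMod n) = (m : ZMod n) + 1 := by push_cast; ring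
    rw [hcast]
    rcases hdir (m : ZMod n) with hd | hd
    · rw [if_pos hd]
      exact (anc_adj_fwd dir hd _).reachable
    · rw [if_neg (fun h => hone _ _ ⟨h, hd⟩)]
      have := (anc_adj_bwd dir hd (∑ i ∈ Finset.range m,
        if dir (c (i : ZMod n)) (c ((i : ZMod n) + 1)) then (1 : ZMod 3) else -1)).reachable
      simpa [sub_eq_add_neg] using this

end aux

theorem stmt_0 {V : Type} (G : SimpleGraph V) (hG : G.Connected)
    (dir : V → V → Prop) [DecidableRel dir]
    (horient : ∀ u v, G.Adj u v ↔ (dir u v ∨ dir v u))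
    (hone : ∀ u v, ¬ (dir u v ∧ dir v u))
    (n : ℕ) [NeZero n] (hn : 3 ≤ n)
    (c : ZMod n → V) (hinj : Function.Injective c)
    (hadj : ∀ i, G.Adj (c i) (c (i + 1)))
    (p q : ℕ)
    (hp : p = (Finset.univ.filter fun i : ZMod n => dir (c i) (c (i + 1))).card)
    (hq : q = (Finset.univ.filter fun i : ZMod n => dir (c (i + 1)) (c i)).card)
    (hD : ¬ ((3 : ℤ) ∣ ((p : ℤ) - (q : ℤ)))) :
    ∀ (k : V) (b b' : ZMod 3), b ≠ b' →
      (ancillary3 dir).Reachable (k, b) (k, b') := by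
  set d : ZMod 3 := (p : ZMod 3) - q with hdd
  have hd0 : d ≠ 0 := by
    intro h
    apply hD
    have : ((p - q : ℤ) : ZMod 3) = 0 := by push_cast; exact h
    exact (ZMod.intCast_zmod_eq_zero_iff_dvd _ 3).1 this
  -- the sum of the weights around the cycle is d
  have hsum : (∑ i ∈ Finset.range n,
      if dir (c (i : ZMod n)) (c ((i : ZMod n) + 1)) then (1 : ZMod 3) else -1) = d := by
    have hre : (∑ i ∈ Finset.range n,
        if dir (c (i : ZMod n)) (c ((i : ZMod n) + 1)) then (1 : ZMod 3) else -1)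
        = ∑ j : ZMod n, if dir (c j) (c (j + 1)) then (1 : ZMod 3) else -1 := by
      refine Finset.sum_nbij' (fun i => (i : ZMod n)) (fun j => j.val) ?_ ?_ ?_ ?_ ?_
      · intro i _; exact Finset.mem_univ _
      · intro j _; exact Finset.mem_range.2 (ZMod.val_lt j)
      · intro i hi; exact ZMod.val_cast_of_lt (Finset.mem_range.1 hi)
      · intro j _; exact ZMod.natCast_rightInverse j
      · intro i _; rfl
    rw [hre, Finset.sum_ite, Finset.sum_const, Finset.sum_const]
    have hfilt : (Finset.univ.filter fun j : ZMod n => ¬ dir (c j) (c (j + 1)))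
        = Finset.univ.filter fun j : ZMod n => dir (c (j + 1)) (c j) := by
      apply Finset.filter_congr
      intro j _
      constructor
      · intro h
        rcases (horient _ _).1 (hadj j) with h1 | h1
        · exact absurd h1 h
        · exact h1
      · intro h h'
        exact hone _ _ ⟨h', h⟩
    rw [hfilt, ← hp, ← hq, hdd]
    simp [nsmul_eq_mul]
    ring
  have hcyc : (ancillary3 dir).Reachable (c 0, 0) (c 0, d) := by
    have := anc_cycle_reach dir c (fun i => (horient _ _).1 (hadj i)) hone n
    rwa [hsum, ZMod.natCast_self] at this
  have hcyc' : ∀ t : ZMod 3, (ancillary3 dir).Reachable (c 0, t) (c 0, t + d) := by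
    intro t
    have := anc_shift dir t hcyc
    simpa [add_comm] using this
  have hloop : ∀ t t' : ZMod 3, (ancillary3 dir).Reachable (c 0, t) (c 0, t') := by
    intro t t'
    have h3 : ∀ d t t' : ZMod 3, d ≠ 0 → t' = t ∨ t' = t + d ∨ t' = t + d + d := by decide
    rcases h3 d t t' hd0 with rfl | rfl | rfl
    · exact SimpleGraph.Reachable.refl _
    · exact hcyc' t
    · exact (hcyc' t).trans (hcyc' (t + d))
  intro k b b' hbb
  obtain ⟨δ, hk⟩ := (hG.preconnected k (c 0)).elim (fun w => anc_reach_walk dir horient w)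
  have hkb : (ancillary3 dir).Reachable (k, b) (c 0, δ + b) := by
    simpa using anc_shift dir b hk
  have hkb' : (ancillary3 dir).Reachable (k, b') (c 0, δ + b') := by
    simpa using anc_shift dir b' hk
  exact hkb.trans ((hloop _ _).trans hkb'.symm)
end

section
/- Let G be an undirected graph whose edges are given an arbitrary orientation, and let H be the ancillary graph with vertex set V × {0,1,2} in which each oriented edge (u,v) of G gives rise to edges (u_b, v_{b+1 mod 3}) for b ∈ {0,1,2}. If G contains no cycle (i.e., G is a forest), then for every vertex v of G and every b ≠ b' in {0,1,2}, there is no path in H from v_b to v_{b'}. -/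
open Classical in
/-- Sign of an oriented edge. -/
noncomputable def wSign {V : Type} (dir : V → V → Prop) (u v : V) : ZMod 3 :=
  if dir u v then 1 else -1

/-- Weight of a walk: signed sum of orientations of its darts. -/
noncomputable def walkWt {V : Type} (dir : V → V → Prop) {G : SimpleGraph V}
    {u w : V} (p : G.Walk u w) : ZMod 3 :=
  (p.darts.map fun d => wSign dir d.toProd.1 d.toProd.2).sum

lemma walkWt_nil {V : Type} (dir : V → V → Prop) {G : SimpleGraph V} {u : V} :
    walkWt dir (SimpleGraph.Walk.nil : G.Walk u u) = 0 := rfl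

lemma walkWt_cons {V : Type} (dir : V → V → Prop) {G : SimpleGraph V} {u x w : V}
    (h : G.Adj u x) (p : G.Walk x w) :
    walkWt dir (SimpleGraph.Walk.cons h p) = wSign dir u x + walkWt dir p := by
  simp [walkWt, SimpleGraph.Walk.darts_cons]

lemma walkWt_append {V : Type} (dir : V → V → Prop) {G : SimpleGraph V} {u x w : V}
    (p : G.Walk u x) (q : G.Walk x w) :
    walkWt dir (p.append q) = walkWt dir p + walkWt dir q := by
  simp [walkWt, SimpleGraph.Walk.darts_append]

theorem stmt_1 {V : Type} (G : SimpleGraph V)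
    (dir : V → V → Prop)
    (horient : ∀ u v, G.Adj u v ↔ (dir u v ∨ dir v u))
    (hone : ∀ u v, ¬ (dir u v ∧ dir v u))
    (hforest : G.IsAcyclic) :
    ∀ (v : V) (b b' : ZMod 3), b ≠ b' →
      ¬ (ancillary3 dir).Reachable (v, b) (v, b') := by
  classical
  have huniq : ∀ ⦃v w : V⦄ (p q : G.Path v w), p = q :=
    (SimpleGraph.isAcyclic_iff_path_unique.mp hforest)
  -- antisymmetry of the sign
  have hsign : ∀ u x : V, G.Adj u x → wSign dir x u = - wSign dir u x := by
    intro u x hadj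
    rcases (horient u x).mp hadj with hd | hd
    · have hnd : ¬ dir x u := fun h => hone u x ⟨hd, h⟩
      simp [wSign, hd, hnd]
    · have hnd : ¬ dir u x := fun h => hone u x ⟨h, hd⟩
      simp [wSign, hd, hnd]
  -- weight of any walk equals weight of any path with the same endpoints
  have key : ∀ {u w : V} (p : G.Walk u w) (P : G.Path u w),
      walkWt dir p = walkWt dir P.val := by
    intro u w p
    induction p with
    | nil =>
      intro P
      rw [huniq P SimpleGraph.Path.nil]
      rfl
    | @cons u x w h p ih =>
      intro P
      set Q : G.Path x w := p.toPath with hQ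
      have hIH : walkWt dir p = walkWt dir Q.val := ih Q
      by_cases hu : u ∈ Q.val.support
      · have ht : (Q.val.takeUntil u hu).IsPath := Q.2.takeUntil hu
        have hd : (Q.val.dropUntil u hu).IsPath := Q.2.dropUntil hu
        have h1 : (⟨Q.val.takeUntil u hu, ht⟩ : G.Path x u)
            = SimpleGraph.Path.singleton h.symm := huniq _ _
        have h2 : (⟨Q.val.dropUntil u hu, hd⟩ : G.Path u w) = P := huniq _ _
        have hsplit : walkWt dir Q.val
            = walkWt dir (Q.val.takeUntil u hu) + walkWt dir (Q.val.dropUntil u hu) := by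
          conv_lhs => rw [← Q.val.take_spec hu]
          exact walkWt_append dir _ _
        have htw : walkWt dir (Q.val.takeUntil u hu) = wSign dir x u := by
          have hv : (↑Q : G.Walk x w).takeUntil u hu
              = (SimpleGraph.Path.singleton h.symm : G.Path x u).val :=
            congrArg Subtype.val h1
          rw [hv]
          simp [SimpleGraph.Path.singleton, walkWt_cons, walkWt_nil]
        have hdw : walkWt dir (Q.val.dropUntil u hu) = walkWt dir P.val :=
          congrArg (fun r : G.Path u w => walkWt dir r.val) h2
        rw [walkWt_cons, hIH, hsplit, htw, hdw, hsign u x h]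
        ring
      · have hR : (SimpleGraph.Walk.cons h Q.val).IsPath := Q.2.cons hu
        have h1 : (⟨SimpleGraph.Walk.cons h Q.val, hR⟩ : G.Path u w) = P := huniq _ _
        have hv : (SimpleGraph.Walk.cons h ↑Q : G.Walk u w) = P.val :=
          congrArg Subtype.val h1
        rw [walkWt_cons, hIH, ← hv, walkWt_cons]
  -- projection lemma
  have proj : ∀ {a c : V × ZMod 3} (q : (ancillary3 dir).Walk a c),
      ∃ p : G.Walk a.1 c.1, c.2 = a.2 + walkWt dir p := by
    intro a c q
    induction q with
    | nil => exact ⟨SimpleGraph.Walk.nil, by simp [walkWt_nil]⟩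
    | @cons a x c h q ih =>
      obtain ⟨p, hp⟩ := ih
      rcases h with ⟨hd, he⟩ | ⟨hd, he⟩
      · have hadj : G.Adj a.1 x.1 := (horient _ _).mpr (Or.inl hd)
        refine ⟨SimpleGraph.Walk.cons hadj p, ?_⟩
        rw [walkWt_cons, hp, he]
        simp [wSign, hd]
        ring
      · have hadj : G.Adj a.1 x.1 := (horient _ _).mpr (Or.inr hd)
        have hnd : ¬ dir a.1 x.1 := fun hh => hone _ _ ⟨hh, hd⟩
        refine ⟨SimpleGraph.Walk.cons hadj p, ?_⟩
        rw [walkWt_cons, hp]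
        have : x.2 = a.2 - 1 := by rw [he]; ring
        rw [this]
        simp [wSign, hnd]
        ring
  intro v b b' hne hreach
  obtain ⟨q⟩ := hreach
  obtain ⟨p, hp⟩ := proj q
  have h0 : walkWt dir p = 0 := by
    rw [key p SimpleGraph.Path.nil]; rfl
  rw [h0, add_zero] at hp
  exact hne hp.symm
end

section
/- Let G be a connected undirected graph with an orientation of its edges, and suppose G contains a cycle C of length c through a vertex k such that the number of clockwise edges minus the number of anticlockwise edges of C is not divisible by 3. Then in the ancillary graph H (three-fold cover construction with levels indexed by Z/3), there is a path from k_0 to k_1 of length at most 2c. -/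
lemma ancillary3_walk_aux {V : Type} {n : ℕ} (dir : V → V → Prop) [DecidableRel dir]
    (c : ZMod n → V)
    (hstep : ∀ i : ZMod n, dir (c i) (c (i+1)) ∨ dir (c (i+1)) (c i))
    (i0 : ZMod n) (b : ZMod 3) (m : ℕ) :
    ∃ w : (ancillary3 dir).Walk (c i0, b)
        (c (i0 + (m : ZMod n)),
          b + ∑ j ∈ Finset.range m,
            (if dir (c (i0 + (j : ZMod n))) (c (i0 + (j : ZMod n) + 1)) then 1 else -1 : ZMod 3)),
      w.length = m := by
  induction m with
  | zero => exact ⟨SimpleGraph.Walk.nil.copy rfl (by simp), by rw [SimpleGraph.Walk.length_copy]; rfl⟩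
  | succ m ih =>
    obtain ⟨w, hw⟩ := ih
    have hc : ((m + 1 : ℕ) : ZMod n) = (m : ZMod n) + 1 := by push_cast; ring
    rw [Finset.sum_range_succ, hc, ← add_assoc]
    have h : (ancillary3 dir).Adj
        (c (i0 + (m : ZMod n)), b + ∑ j ∈ Finset.range m,
            (if dir (c (i0 + (j : ZMod n))) (c (i0 + (j : ZMod n) + 1)) then 1 else -1 : ZMod 3))
        (c (i0 + (m : ZMod n) + 1), b + ((∑ j ∈ Finset.range m,
            (if dir (c (i0 + (j : ZMod n))) (c (i0 + (j : ZMod n) + 1)) then 1 else -1 : ZMod 3))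
          + (if dir (c (i0 + (m : ZMod n))) (c (i0 + (m : ZMod n) + 1)) then 1 else -1))) := by
      by_cases hd : dir (c (i0 + (m : ZMod n))) (c (i0 + (m : ZMod n) + 1))
      · exact Or.inl ⟨hd, by rw [if_pos hd]; ring⟩
      · exact Or.inr ⟨(hstep _).resolve_left hd, by rw [if_neg hd]; ring⟩
    exact ⟨w.concat h, by rw [SimpleGraph.Walk.length_concat, hw]⟩

theorem stmt_2 {V : Type} (G : SimpleGraph V) (hG : G.Connected)
    (dir : V → V → Prop) [DecidableRel dir]
    (horient : ∀ u v, G.Adj u v ↔ (dir u v ∨ dir v u))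
    (hone : ∀ u v, ¬ (dir u v ∧ dir v u))
    (n : ℕ) [NeZero n] (hn : 3 ≤ n)
    (c : ZMod n → V) (hinj : Function.Injective c)
    (hadj : ∀ i, G.Adj (c i) (c (i + 1)))
    (k : V) (hk : ∃ i, c i = k)
    (p q : ℕ)
    (hp : p = (Finset.univ.filter fun i : ZMod n => dir (c i) (c (i + 1))).card)
    (hq : q = (Finset.univ.filter fun i : ZMod n => dir (c (i + 1)) (c i)).card)
    (hD : ¬ ((3 : ℤ) ∣ ((p : ℤ) - (q : ℤ)))) :
    ∃ w : (ancillary3 dir).Walk (k, 0) (k, 1), w.IsPath ∧ w.length ≤ 2 * n := by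
  classical
  obtain ⟨i0, hi0⟩ := hk
  have hstep : ∀ i : ZMod n, dir (c i) (c (i+1)) ∨ dir (c (i+1)) (c i) :=
    fun i => (horient _ _).mp (hadj i)
  set ε : ZMod n → ZMod 3 := fun i => if dir (c i) (c (i+1)) then 1 else -1 with hε
  set S : ZMod 3 := ∑ j ∈ Finset.range n, ε (i0 + (j : ZMod n)) with hSdef
  -- The sum over the range equals the sum over all of ZMod n
  have hsum1 : S = ∑ i : ZMod n, ε i := by
    rw [hSdef]
    refine Finset.sum_nbij' (fun j => i0 + (j : ZMod n)) (fun i => (i - i0).val) ?_ ?_ ?_ ?_ ?_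
    · intro j hj; exact Finset.mem_univ _
    · intro i hi; exact Finset.mem_range.mpr (ZMod.val_lt _)
    · intro j hj
      rw [add_sub_cancel_left, ZMod.val_natCast, Nat.mod_eq_of_lt (Finset.mem_range.mp hj)]
    · intro i hi
      rw [ZMod.natCast_val, ZMod.cast_id]; ring
    · intro j hj; rfl
  -- compute the total sum
  have hq' : (Finset.univ.filter fun i : ZMod n => ¬ dir (c i) (c (i + 1))).card = q := by
    rw [hq]
    congr 1
    ext i
    simp only [Finset.mem_filter, Finset.mem_univ, true_and]
    constructor
    · intro h; exact (hstep i).resolve_left h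
    · intro h hf; exact hone _ _ ⟨hf, h⟩
  have hsum2 : (∑ i : ZMod n, ε i) = (p : ZMod 3) - (q : ZMod 3) := by
    simp only [hε]
    rw [Finset.sum_ite, Finset.sum_const, Finset.sum_const, ← hp, hq']
    simp [sub_eq_add_neg]
  have hScast : S = (((p : ℤ) - (q : ℤ) : ℤ) : ZMod 3) := by
    rw [hsum1, hsum2]; push_cast; ring
  have hS0 : S ≠ 0 := by
    rw [hScast]
    intro h
    exact hD ((ZMod.intCast_zmod_eq_zero_iff_dvd _ _).mp h)
  have hcyc : c (i0 + (n : ZMod n)) = k := by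
    rw [ZMod.natCast_self, add_zero, hi0]
  have h12 : S = 1 ∨ S = 2 := by
    have : ∀ x : ZMod 3, x ≠ 0 → x = 1 ∨ x = 2 := by decide
    exact this S hS0
  have key : ∃ w : (ancillary3 dir).Walk (k, 0) (k, 1), w.length ≤ 2 * n := by
    rcases h12 with hS1 | hS2
    · obtain ⟨w, hw⟩ := ancillary3_walk_aux dir c hstep i0 0 n
      refine ⟨w.copy (by rw [hi0]) (by rw [hcyc, ← hSdef, hS1, zero_add]), ?_⟩
      rw [SimpleGraph.Walk.length_copy, hw]
      omega
    · obtain ⟨w1, hw1⟩ := ancillary3_walk_aux dir c hstep i0 0 n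
      obtain ⟨w2, hw2⟩ := ancillary3_walk_aux dir c hstep i0 S n
      refine ⟨(w1.copy (by rw [hi0]) (by rw [hcyc, ← hSdef, zero_add])).append
        (w2.copy (by rw [hi0]) (by rw [hcyc, ← hSdef, hS2, show ((2:ZMod 3)+2) = 1 from by decide])), ?_⟩
      rw [SimpleGraph.Walk.length_append, SimpleGraph.Walk.length_copy,
        SimpleGraph.Walk.length_copy, hw1, hw2]
      omega
  obtain ⟨w, hw⟩ := key
  exact ⟨w.bypass, w.bypass_isPath, le_trans w.length_bypass_le hw⟩
end

section
/- Let G be a connected undirected graph with oriented edges containing a cycle of length c through a vertex v such that the difference D between clockwise and anticlockwise edges satisfies D ≢ 0 (mod 3). Then in the ancillary graph H (with vertex set V × Z/3 and edges (u_b, v_{b+1 mod 3}) for each oriented edge (u,v)), the three vertices v_0, v_1, v_2 all lie on a single cycle of length 3c in H. -/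
namespace Stmt3Aux

variable {α : Type*} {H : SimpleGraph α} {g : ℕ → α}

/-- Walk along `g 0, g 1, …, g k`. -/
def toWalk (hg : ∀ j, H.Adj (g j) (g (j+1))) : (k : ℕ) → H.Walk (g 0) (g k)
  | 0 => SimpleGraph.Walk.nil
  | k+1 => (toWalk hg k).concat (hg k)

@[simp] lemma toWalk_length (hg : ∀ j, H.Adj (g j) (g (j+1))) (k : ℕ) :
    (toWalk hg k).length = k := by
  induction k with
  | zero => rfl
  | succ k ih => simp [toWalk, SimpleGraph.Walk.length_concat, ih]

lemma toWalk_support (hg : ∀ j, H.Adj (g j) (g (j+1))) (k : ℕ) :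
    (toWalk hg k).support = (List.range (k+1)).map g := by
  induction k with
  | zero => simp [toWalk, List.range_succ]
  | succ k ih =>
    simp [toWalk, SimpleGraph.Walk.support_concat, ih, List.range_succ]

lemma toWalk_edges (hg : ∀ j, H.Adj (g j) (g (j+1))) (k : ℕ) :
    (toWalk hg k).edges = (List.range k).map (fun j => s(g j, g (j+1))) := by
  induction k with
  | zero => simp [toWalk]
  | succ k ih =>
    simp [toWalk, SimpleGraph.Walk.edges_concat, ih, List.range_succ]

end Stmt3Aux

theorem stmt_3 {V : Type} (G : SimpleGraph V) (hG : G.Connected)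
    (dir : V → V → Prop) [DecidableRel dir]
    (horient : ∀ u v, G.Adj u v ↔ (dir u v ∨ dir v u))
    (hone : ∀ u v, ¬ (dir u v ∧ dir v u))
    (n : ℕ) [NeZero n] (hn : 3 ≤ n)
    (c : ZMod n → V) (hinj : Function.Injective c)
    (hadj : ∀ i, G.Adj (c i) (c (i + 1)))
    (v : V) (hv : ∃ i, c i = v)
    (p q : ℕ)
    (hp : p = (Finset.univ.filter fun i : ZMod n => dir (c i) (c (i + 1))).card)
    (hq : q = (Finset.univ.filter fun i : ZMod n => dir (c (i + 1)) (c i)).card)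
    (hD : ¬ ((3 : ℤ) ∣ ((p : ℤ) - (q : ℤ)))) :
    ∃ w : (ancillary3 dir).Walk (v, 0) (v, 0), w.IsCycle ∧ w.length = 3 * n ∧
      ∀ b : ZMod 3, (v, b) ∈ w.support := by
  classical
  obtain ⟨i₀, hi₀⟩ := hv
  -- direction indicator
  set ε : ℕ → ZMod 3 := fun j => if dir (c (i₀ + (j : ZMod n))) (c (i₀ + (j : ZMod n) + 1)) then 1 else -1 with hε
  set f : ℕ → ZMod 3 := fun j => ∑ t ∈ Finset.range j, ε t with hf
  set D : ZMod 3 := f n with hDdef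
  set g : ℕ → V × ZMod 3 := fun j => (c (i₀ + (j : ZMod n)), f j) with hg
  have hfsucc : ∀ j, f (j+1) = f j + ε j := by
    intro j; simp [hf, Finset.sum_range_succ]
  -- adjacency of consecutive g's
  have hgadj : ∀ j, (ancillary3 dir).Adj (g j) (g (j+1)) := by
    intro j
    have hor := (horient _ _).mp (hadj (i₀ + (j : ZMod n)))
    by_cases hd : dir (c (i₀ + (j : ZMod n))) (c (i₀ + (j : ZMod n) + 1))
    · refine Or.inl ⟨?_, ?_⟩
      · simpa [hg, Nat.cast_add, add_assoc] using hd
      · simp [hg, hfsucc, hε, hd, Nat.cast_add]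
    · have hd' : dir (c (i₀ + (j : ZMod n) + 1)) (c (i₀ + (j : ZMod n))) := hor.resolve_left hd
      refine Or.inr ⟨?_, ?_⟩
      · simpa [hg, Nat.cast_add, add_assoc] using hd'
      · have h5 : f (j+1) = f j - 1 := by rw [hfsucc]; simp [hε, hd]; ring
        show f j = f (j+1) + 1
        rw [h5]; ring
  -- ε is n-periodic
  have hεper : ∀ j, ε (j + n) = ε j := by
    intro j
    simp [hε, Nat.cast_add, ZMod.natCast_self]
  have hfper : ∀ j, f (j + n) = f j + D := by
    intro j
    induction j with
    | zero => simpa [hf] using hDdef.symm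
    | succ j ih =>
      have : j + 1 + n = (j + n) + 1 := by omega
      rw [this, hfsucc, ih, hεper, hfsucc]; ring
  have hfshift : ∀ t j, f (j + t * n) = f j + t * D := by
    intro t
    induction t with
    | zero => simp
    | succ t ih =>
      intro j
      have : j + (t+1) * n = (j + t * n) + n := by ring
      rw [this, hfper, ih]; push_cast; ring
  -- D = p - q
  have hcompl : (Finset.univ.filter fun i : ZMod n => ¬ dir (c i) (c (i + 1)))
      = (Finset.univ.filter fun i : ZMod n => dir (c (i + 1)) (c i)) := by
    apply Finset.filter_congr
    intro i _
    have hor := (horient _ _).mp (hadj i)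
    have h1 := hone (c i) (c (i+1))
    constructor
    · intro h; exact hor.resolve_left h
    · intro h hf'; exact h1 ⟨hf', h⟩
  have hDval : D = (p : ZMod 3) - (q : ZMod 3) := by
    have hbij : ∑ t ∈ Finset.range n, ε t
        = ∑ i : ZMod n, (if dir (c i) (c (i + 1)) then (1 : ZMod 3) else -1) := by
      refine Finset.sum_nbij' (i := fun t => i₀ + (t : ZMod n))
        (j := fun i : ZMod n => (i - i₀).val) ?_ ?_ ?_ ?_ ?_
      · intro t _; exact Finset.mem_univ _
      · intro i _; exact Finset.mem_range.mpr (ZMod.val_lt _)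
      · intro t ht
        have ht' := Finset.mem_range.mp ht
        simp [ZMod.val_natCast_of_lt ht']
      · intro i _
        simp [ZMod.natCast_val, ZMod.cast_id]
      · intro t _
        simp [hε]
    have hfn : f n = ∑ t ∈ Finset.range n, ε t := rfl
    rw [hDdef, hfn, hbij, Finset.sum_ite, Finset.sum_const, Finset.sum_const, hcompl, ← hp, ← hq]
    simp [nsmul_eq_mul]
    ring
  have hD0 : D ≠ 0 := by
    rw [hDval]
    intro h
    apply hD
    have : (((p : ℤ) - (q : ℤ) : ℤ) : ZMod 3) = 0 := by push_cast; push_cast at h; linear_combination h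
    exact (ZMod.intCast_zmod_eq_zero_iff_dvd _ 3).mp this
  have hnpos : 0 < n := Nat.pos_of_ne_zero (NeZero.ne n)
  -- injectivity of g on [0, 3n)
  have hkey : ∀ j k : ℕ, j ≤ k → k < j + 3 * n → g j = g k → j = k := by
    intro j k hjk hlt hgjk
    have h1 : c (i₀ + (j : ZMod n)) = c (i₀ + (k : ZMod n)) := congrArg Prod.fst hgjk
    have h2 : f j = f k := congrArg Prod.snd hgjk
    have h3 : (j : ZMod n) = (k : ZMod n) := by
      have := hinj h1
      exact add_left_cancel this
    have hmod : j % n = k % n := (ZMod.natCast_eq_natCast_iff' _ _ _).mp h3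
    have hdvd : n ∣ (k - j) := (Nat.modEq_iff_dvd' hjk).mp hmod
    obtain ⟨t, ht⟩ := hdvd
    have htlt : t < 3 := by
      by_contra hcon
      push_neg at hcon
      have := Nat.mul_le_mul_left n hcon
      omega
    rw [mul_comm] at ht
    have hk : k = j + t * n := by omega
    rw [hk] at h2
    rw [hfshift] at h2
    have : (t : ZMod 3) * D = 0 := by linear_combination -h2
    have ht0 : (t : ZMod 3) = 0 := by
      rcases mul_eq_zero.mp this with h | h
      · exact h
      · exact absurd h hD0
    have h3t : (3 : ℕ) ∣ t := (ZMod.natCast_eq_zero_iff t 3).mp ht0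
    have ht00 : t = 0 := by omega
    rw [ht00, Nat.zero_mul, Nat.add_zero] at hk
    omega
  -- the walk
  have hg0 : g 0 = (v, 0) := by
    simp [hg, hf, hi₀]
  have hg3n : g (3 * n) = (v, 0) := by
    have h1 : ((3 * n : ℕ) : ZMod n) = 0 := by
      push_cast; simp [ZMod.natCast_self]
    have h2 : f (3 * n) = 0 := by
      rw [show (3 * n : ℕ) = 0 + 3 * n by ring, hfshift]
      have h3 : ((3:ℕ) : ZMod 3) = 0 := by decide
      rw [h3]
      simp [hf]
    simp [hg, h1, h2, hi₀]
  refine ⟨(Stmt3Aux.toWalk hgadj (3 * n)).copy hg0 hg3n, ?_, ?_, ?_⟩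
  · rw [SimpleGraph.Walk.isCycle_def]
    refine ⟨⟨?_⟩, ?_, ?_⟩
    · -- edges nodup
      rw [SimpleGraph.Walk.edges_copy, Stmt3Aux.toWalk_edges]
      refine List.Nodup.map_on ?_ List.nodup_range
      intro j hj k hk he
      have hj' := List.mem_range.mp hj
      have hk' := List.mem_range.mp hk
      rcases Sym2.eq_iff.mp he with ⟨e1, e2⟩ | ⟨e1, e2⟩
      · rcases le_total j k with h | h
        · exact hkey j k h (by omega) e1
        · exact (hkey k j h (by omega) e1.symm).symm
      · -- g j = g (k+1), g (j+1) = g k : contradiction via first coords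
        exfalso
        have c1 : (j : ZMod n) = (k : ZMod n) + 1 := by
          have := hinj (congrArg Prod.fst e1)
          have := add_left_cancel this
          push_cast at this; exact this
        have c2 : (j : ZMod n) + 1 = (k : ZMod n) := by
          have := hinj (congrArg Prod.fst e2)
          have := add_left_cancel this
          push_cast at this; exact this
        have h20 : ((2 : ℕ) : ZMod n) = 0 := by
          push_cast
          linear_combination c2 - c1
        have hdvd2 : (n : ℕ) ∣ 2 := (ZMod.natCast_eq_zero_iff 2 n).mp h20
        have := Nat.le_of_dvd (by norm_num) hdvd2
        omega
    · -- nonempty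
      intro hnil
      have := congrArg SimpleGraph.Walk.length hnil
      rw [SimpleGraph.Walk.length_copy, Stmt3Aux.toWalk_length] at this
      simp at this
      omega
    · -- support tail nodup
      rw [SimpleGraph.Walk.support_copy, Stmt3Aux.toWalk_support]
      rw [List.range_succ_eq_map]
      simp only [List.map_cons, List.tail_cons, List.map_map]
      refine List.Nodup.map_on ?_ List.nodup_range
      intro j hj k hk he
      have hj' := List.mem_range.mp hj
      have hk' := List.mem_range.mp hk
      simp only [Function.comp, Nat.succ_eq_add_one] at he
      -- g (j+1) = g (k+1) with j, k < 3n
      rcases le_total j k with h | h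
      · rcases Nat.lt_or_ge (k+1) (3*n) with hk3 | hk3
        · have := hkey (j+1) (k+1) (by omega) (by omega) he
          omega
        · -- k+1 = 3n
          have hk1 : k + 1 = 3 * n := by omega
          rcases Nat.lt_or_ge (j+1) (3*n) with hj3 | hj3
          · exfalso
            have he' : g (j+1) = g 0 := by rw [he, hk1, hg3n, hg0]
            have := hkey 0 (j+1) (by omega) (by omega) he'.symm
            omega
          · omega
      · rcases Nat.lt_or_ge (j+1) (3*n) with hj3 | hj3
        · have := hkey (k+1) (j+1) (by omega) (by omega) he.symm
          omega
        · have hj1 : j + 1 = 3 * n := by omega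
          rcases Nat.lt_or_ge (k+1) (3*n) with hk3 | hk3
          · exfalso
            have he' : g (k+1) = g 0 := by rw [← he, hj1, hg3n, hg0]
            have := hkey 0 (k+1) (by omega) (by omega) he'.symm
            omega
          · omega
  · rw [SimpleGraph.Walk.length_copy, Stmt3Aux.toWalk_length]
  · intro b
    rw [SimpleGraph.Walk.support_copy, Stmt3Aux.toWalk_support]
    have hmem : ∀ j : ℕ, j < 3 * n + 1 → g j ∈ (List.range (3*n+1)).map g := by
      intro j hj
      exact List.mem_map_of_mem (f := g) (List.mem_range.mpr hj)
    have hgn : g n = (v, D) := by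
      simp [hg, ZMod.natCast_self, hi₀, hDdef]
    have hg2n : g (2 * n) = (v, D + D) := by
      have h1 : ((2 * n : ℕ) : ZMod n) = 0 := by push_cast; simp [ZMod.natCast_self]
      have h2 : f (2 * n) = D + D := by
        rw [show (2 * n : ℕ) = 0 + 2 * n by ring, hfshift]
        simp [hf]; ring
      simp [hg, h1, h2, hi₀]
    have hcases : D = 1 ∨ D = 2 := by
      have : ∀ x : ZMod 3, x = 0 ∨ x = 1 ∨ x = 2 := by decide
      rcases this D with h | h | h
      · exact absurd h hD0
      · exact Or.inl h
      · exact Or.inr h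
    have hb : b = 0 ∨ b = 1 ∨ b = 2 := by
      have : ∀ x : ZMod 3, x = 0 ∨ x = 1 ∨ x = 2 := by decide
      exact this b
    rcases hb with hb | hb | hb
    · subst hb; rw [← hg0]; exact hmem 0 (by omega)
    · subst hb
      rcases hcases with h | h
      · rw [show ((1:ZMod 3)) = D from h.symm, ← hgn]; exact hmem n (by omega)
      · have h22 : (D + D : ZMod 3) = 1 := by rw [h]; decide
        rw [← h22, ← hg2n]; exact hmem (2*n) (by omega)
    · subst hb
      rcases hcases with h | h
      · have h22 : (D + D : ZMod 3) = 2 := by rw [h]; decide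
        rw [← h22, ← hg2n]; exact hmem (2*n) (by omega)
      · rw [show ((2:ZMod 3)) = D from h.symm, ← hgn]; exact hmem n (by omega)
end

section
/- Let A and B be matrices with n rows and orthonormal columns, and let U = R_B R_A with R_A = 2AA† − I, R_B = 2BB† − I. Then the +1 eigenspace of U contains (and in fact equals) (C(A) ∩ C(B)) ⊕ (C(A)^⊥ ∩ C(B)^⊥), where C(A), C(B) denote the column spaces of A and B. -/
open Matrix
open scoped InnerProductSpace

section helpers
variable {n m p : ℕ}

lemma tel_mul (M : Matrix (Fin n) (Fin m) ℂ) (N : Matrix (Fin m) (Fin p) ℂ)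
    (x : EuclideanSpace ℂ (Fin p)) :
    Matrix.toEuclideanLin (M * N) x = Matrix.toEuclideanLin M (Matrix.toEuclideanLin N x) := by
  simp [Matrix.toEuclideanLin_apply, Matrix.mulVec_mulVec]

lemma tel_one (x : EuclideanSpace ℂ (Fin n)) :
    Matrix.toEuclideanLin (1 : Matrix (Fin n) (Fin n) ℂ) x = x := by
  simp [Matrix.toEuclideanLin_apply]

lemma range_mem_iff {k : ℕ} (A : Matrix (Fin n) (Fin k) ℂ) (hA : Aᴴ * A = 1)
    (x : EuclideanSpace ℂ (Fin n)) :
    x ∈ LinearMap.range (Matrix.toEuclideanLin A) ↔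
      Matrix.toEuclideanLin (A * Aᴴ) x = x := by
  constructor
  · rintro ⟨y, rfl⟩
    rw [← tel_mul, Matrix.mul_assoc, hA, Matrix.mul_one]
  · intro h
    exact ⟨Matrix.toEuclideanLin Aᴴ x, by rw [← tel_mul, h]⟩

lemma perp_mem_iff {k : ℕ} (A : Matrix (Fin n) (Fin k) ℂ) (hA : Aᴴ * A = 1)
    (x : EuclideanSpace ℂ (Fin n)) :
    x ∈ (LinearMap.range (Matrix.toEuclideanLin A))ᗮ ↔
      Matrix.toEuclideanLin (A * Aᴴ) x = 0 := by
  have hadj : ∀ y : EuclideanSpace ℂ (Fin k),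
      ⟪Matrix.toEuclideanLin A y, x⟫_ℂ = ⟪y, Matrix.toEuclideanLin Aᴴ x⟫_ℂ := by
    intro y
    rw [Matrix.toEuclideanLin_conjTranspose_eq_adjoint, LinearMap.adjoint_inner_right]
  have key : x ∈ (LinearMap.range (Matrix.toEuclideanLin A))ᗮ ↔
      Matrix.toEuclideanLin Aᴴ x = 0 := by
    constructor
    · intro h
      have := h (Matrix.toEuclideanLin A (Matrix.toEuclideanLin Aᴴ x))
        ⟨Matrix.toEuclideanLin Aᴴ x, rfl⟩
      rw [hadj] at this
      exact inner_self_eq_zero.mp this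
    · intro h u hu
      obtain ⟨y, rfl⟩ := hu
      rw [hadj, h, inner_zero_right]
  rw [key]
  constructor
  · intro h
    rw [tel_mul, h, map_zero]
  · intro h
    have : Matrix.toEuclideanLin (Aᴴ * (A * Aᴴ)) x = Matrix.toEuclideanLin Aᴴ x := by
      rw [← Matrix.mul_assoc, hA, Matrix.one_mul]
    rw [← this, tel_mul, h, map_zero]

end helpers

open Matrix in
theorem stmt_11 (n k l : ℕ) (A : Matrix (Fin n) (Fin k) ℂ) (B : Matrix (Fin n) (Fin l) ℂ)
    (hA : Aᴴ * A = 1) (hB : Bᴴ * B = 1) :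
    Module.End.eigenspace
        (Matrix.toEuclideanLin
          (((2 : ℂ) • (B * Bᴴ) - 1) * ((2 : ℂ) • (A * Aᴴ) - 1))) 1
      = (LinearMap.range (Matrix.toEuclideanLin A)
            ⊓ LinearMap.range (Matrix.toEuclideanLin B))
        ⊔ ((LinearMap.range (Matrix.toEuclideanLin A))ᗮ
            ⊓ (LinearMap.range (Matrix.toEuclideanLin B))ᗮ) := by
  set P := Matrix.toEuclideanLin (A * Aᴴ) with hP
  set Q := Matrix.toEuclideanLin (B * Bᴴ) with hQ
  have hPP : ∀ x, P (P x) = P x := by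
    intro x
    rw [hP, ← tel_mul, Matrix.mul_assoc, ← Matrix.mul_assoc Aᴴ, hA, Matrix.one_mul]
  have hQQ : ∀ x, Q (Q x) = Q x := by
    intro x
    rw [hQ, ← tel_mul, Matrix.mul_assoc, ← Matrix.mul_assoc Bᴴ, hB, Matrix.one_mul]
  have hU : ∀ x : EuclideanSpace ℂ (Fin n),
      Matrix.toEuclideanLin (((2 : ℂ) • (B * Bᴴ) - 1) * ((2 : ℂ) • (A * Aᴴ) - 1)) x
        = (2 : ℂ) • Q ((2 : ℂ) • P x - x) - ((2 : ℂ) • P x - x) := by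
    have hone : Matrix.toEuclideanLin (1 : Matrix (Fin n) (Fin n) ℂ) = LinearMap.id := by
      exact LinearMap.ext fun y => tel_one y
    have hRA : Matrix.toEuclideanLin ((2 : ℂ) • (A * Aᴴ) - 1) = (2 : ℂ) • P - LinearMap.id := by
      rw [map_sub, _root_.map_smul, hone, hP]
    have hRB : Matrix.toEuclideanLin ((2 : ℂ) • (B * Bᴴ) - 1) = (2 : ℂ) • Q - LinearMap.id := by
      rw [map_sub, _root_.map_smul, hone, hQ]
    intro x
    rw [tel_mul, hRA, hRB]
    simp only [LinearMap.sub_apply, LinearMap.smul_apply, LinearMap.id_apply]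
  ext x
  rw [Module.End.mem_eigenspace_iff, one_smul, hU x]
  constructor
  · intro hx
    have h1 : (2 : ℂ) • Q (P x) = Q x + P x := by
      have e : (2 : ℂ) • ((2 : ℂ) • Q (P x)) = (2 : ℂ) • (Q x + P x) := by
        have h2 := hx
        rw [map_sub, _root_.map_smul] at h2
        linear_combination (norm := module) h2
      exact smul_right_injective _ (two_ne_zero) e
    have h2 : Q ((2 : ℂ) • P x - x) = P x := by
      rw [map_sub, _root_.map_smul, h1]
      module
    have h3 : Q (P x) = P x := by
      conv_lhs => rw [← h2, hQQ, h2]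
    have h4 : Q x = P x := by
      have h5 := h1
      rw [h3, two_smul] at h5
      exact add_right_cancel h5.symm
    refine Submodule.mem_sup.mpr ⟨P x, ⟨?_, ?_⟩, x - P x, ⟨?_, ?_⟩, by abel⟩
    · exact (range_mem_iff A hA (P x)).mpr (hPP x)
    · exact (range_mem_iff B hB (P x)).mpr h3
    · exact (perp_mem_iff A hA _).mpr (by rw [map_sub, hPP, sub_self])
    · exact (perp_mem_iff B hB _).mpr (by rw [map_sub, h4, h3, sub_self])
  · intro hx
    rw [Submodule.mem_sup] at hx
    obtain ⟨u, ⟨huA, huB⟩, v, ⟨hvA, hvB⟩, rfl⟩ := hx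
    have hPu : P u = u := (range_mem_iff A hA u).mp huA
    have hQu : Q u = u := (range_mem_iff B hB u).mp huB
    have hPv : P v = 0 := (perp_mem_iff A hA v).mp hvA
    have hQv : Q v = 0 := (perp_mem_iff B hB v).mp hvB
    rw [map_add, hPu, hPv, add_zero]
    rw [show (2:ℂ) • u - (u + v) = u - v from by module]
    rw [map_sub, hQu, hQv, sub_zero]
    module
end

section
/- Let A and B be matrices with n rows and orthonormal columns and U = R_B R_A the product of the reflections about their column spaces. Then the −1 eigenspace of U equals (C(A) ∩ C(B)^⊥) ⊕ (C(A)^⊥ ∩ C(B)), and moreover C(A)^⊥ ∩ C(B) = B(ker(A†B)). -/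
open Matrix

private lemma toEL_mul {a b c : ℕ} (M : Matrix (Fin a) (Fin b) ℂ) (N : Matrix (Fin b) (Fin c) ℂ)
    (x : EuclideanSpace ℂ (Fin c)) :
    Matrix.toEuclideanLin (M * N) x = Matrix.toEuclideanLin M (Matrix.toEuclideanLin N x) := by
  simp [Matrix.toEuclideanLin_apply, Matrix.mulVec_mulVec]

private lemma toEL_one {a : ℕ} (x : EuclideanSpace ℂ (Fin a)) :
    Matrix.toEuclideanLin (1 : Matrix (Fin a) (Fin a) ℂ) x = x := by
  simp [Matrix.toEuclideanLin_apply]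

private lemma inner_toEL {a b : ℕ} (M : Matrix (Fin a) (Fin b) ℂ)
    (y : EuclideanSpace ℂ (Fin b)) (x : EuclideanSpace ℂ (Fin a)) :
    (inner ℂ (Matrix.toEuclideanLin M y) x : ℂ)
      = inner ℂ y (Matrix.toEuclideanLin Mᴴ x) := by
  rw [Matrix.toEuclideanLin_conjTranspose_eq_adjoint, LinearMap.adjoint_inner_right]

private lemma mem_orth_range_iff {a b : ℕ} (M : Matrix (Fin a) (Fin b) ℂ)
    (x : EuclideanSpace ℂ (Fin a)) :
    x ∈ (LinearMap.range (Matrix.toEuclideanLin M))ᗮ ↔ Matrix.toEuclideanLin Mᴴ x = 0 := by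
  constructor
  · intro h
    have h2 : (inner ℂ (Matrix.toEuclideanLin M (Matrix.toEuclideanLin Mᴴ x)) x : ℂ) = 0 :=
      h _ ⟨_, rfl⟩
    rw [inner_toEL] at h2
    exact inner_self_eq_zero.mp h2
  · intro h u hu
    obtain ⟨y, rfl⟩ := hu
    rw [inner_toEL, h, inner_zero_right]

open Matrix in
theorem stmt_12 (n k l : ℕ) (A : Matrix (Fin n) (Fin k) ℂ) (B : Matrix (Fin n) (Fin l) ℂ)
    (hA : Aᴴ * A = 1) (hB : Bᴴ * B = 1) :
    (Module.End.eigenspace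
        (Matrix.toEuclideanLin
          (((2 : ℂ) • (B * Bᴴ) - 1) * ((2 : ℂ) • (A * Aᴴ) - 1))) (-1)
      = (LinearMap.range (Matrix.toEuclideanLin A)
            ⊓ (LinearMap.range (Matrix.toEuclideanLin B))ᗮ)
        ⊔ ((LinearMap.range (Matrix.toEuclideanLin A))ᗮ
            ⊓ LinearMap.range (Matrix.toEuclideanLin B))) ∧
    (LinearMap.range (Matrix.toEuclideanLin A))ᗮ
        ⊓ LinearMap.range (Matrix.toEuclideanLin B)
      = Submodule.map (Matrix.toEuclideanLin B)
          (LinearMap.ker (Matrix.toEuclideanLin (Aᴴ * B))) := by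
  set p : EuclideanSpace ℂ (Fin n) →ₗ[ℂ] EuclideanSpace ℂ (Fin n) :=
    Matrix.toEuclideanLin (A * Aᴴ) with hp
  set q : EuclideanSpace ℂ (Fin n) →ₗ[ℂ] EuclideanSpace ℂ (Fin n) :=
    Matrix.toEuclideanLin (B * Bᴴ) with hq
  -- p, q idempotent
  have hpp : ∀ x, p (p x) = p x := by
    intro x
    rw [hp, ← toEL_mul]
    have : A * Aᴴ * (A * Aᴴ) = A * Aᴴ := by
      rw [Matrix.mul_assoc, ← Matrix.mul_assoc Aᴴ, hA, Matrix.one_mul]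
    rw [this]
  have hqq : ∀ x, q (q x) = q x := by
    intro x
    rw [hq, ← toEL_mul]
    have : B * Bᴴ * (B * Bᴴ) = B * Bᴴ := by
      rw [Matrix.mul_assoc, ← Matrix.mul_assoc Bᴴ, hB, Matrix.one_mul]
    rw [this]
  -- range characterizations
  have hmemA : ∀ x, x ∈ LinearMap.range (Matrix.toEuclideanLin A) ↔ p x = x := by
    intro x
    constructor
    · rintro ⟨y, rfl⟩
      rw [hp, ← toEL_mul, Matrix.mul_assoc, hA, Matrix.mul_one]
    · intro h
      refine ⟨Matrix.toEuclideanLin Aᴴ x, ?_⟩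
      rw [← toEL_mul, ← hp, h]
  have hmemB : ∀ x, x ∈ LinearMap.range (Matrix.toEuclideanLin B) ↔ q x = x := by
    intro x
    constructor
    · rintro ⟨y, rfl⟩
      rw [hq, ← toEL_mul, Matrix.mul_assoc, hB, Matrix.mul_one]
    · intro h
      refine ⟨Matrix.toEuclideanLin Bᴴ x, ?_⟩
      rw [← toEL_mul, ← hq, h]
  have horthA : ∀ x, x ∈ (LinearMap.range (Matrix.toEuclideanLin A))ᗮ ↔ p x = 0 := by
    intro x
    rw [mem_orth_range_iff]
    constructor
    · intro h
      rw [hp, toEL_mul, h, map_zero]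
    · intro h
      have h2 : Matrix.toEuclideanLin Aᴴ (p x) = 0 := by rw [h, map_zero]
      rw [hp, ← toEL_mul, ← Matrix.mul_assoc, hA, Matrix.one_mul] at h2
      exact h2
  have horthB : ∀ x, x ∈ (LinearMap.range (Matrix.toEuclideanLin B))ᗮ ↔ q x = 0 := by
    intro x
    rw [mem_orth_range_iff]
    constructor
    · intro h
      rw [hq, toEL_mul, h, map_zero]
    · intro h
      have h2 : Matrix.toEuclideanLin Bᴴ (q x) = 0 := by rw [h, map_zero]
      rw [hq, ← toEL_mul, ← Matrix.mul_assoc, hB, Matrix.one_mul] at h2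
      exact h2
  constructor
  · ext x
    rw [Module.End.mem_eigenspace_iff]
    have eA : ∀ z : EuclideanSpace ℂ (Fin n),
        Matrix.toEuclideanLin ((2 : ℂ) • (A * Aᴴ) - 1) z = (2 : ℂ) • p z - z := by
      intro z
      rw [map_sub, LinearEquiv.map_smul, LinearMap.sub_apply, LinearMap.smul_apply,
        toEL_one, hp]
    have eB : ∀ z : EuclideanSpace ℂ (Fin n),
        Matrix.toEuclideanLin ((2 : ℂ) • (B * Bᴴ) - 1) z = (2 : ℂ) • q z - z := by
      intro z
      rw [map_sub, LinearEquiv.map_smul, LinearMap.sub_apply, LinearMap.smul_apply,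
        toEL_one, hq]
    have hUx : Matrix.toEuclideanLin
        (((2 : ℂ) • (B * Bᴴ) - 1) * ((2 : ℂ) • (A * Aᴴ) - 1)) x
        = (4 : ℂ) • q (p x) - (2 : ℂ) • q x - (2 : ℂ) • p x + x := by
      rw [toEL_mul, eA, eB, map_sub, LinearMap.map_smul]
      module
    have key : (Matrix.toEuclideanLin
        (((2 : ℂ) • (B * Bᴴ) - 1) * ((2 : ℂ) • (A * Aᴴ) - 1)) x = (-1 : ℂ) • x)
        ↔ p x + q x = x := by
      rw [hUx]
      constructor
      · intro h
        have h1 : (4 : ℂ) • q (p x) = (2 : ℂ) • q x + (2 : ℂ) • p x - (2 : ℂ) • x := by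
          have h' := h
          rw [neg_smul, one_smul] at h'
          linear_combination (norm := module) h'
        have h2 : (4 : ℂ) • q (q (p x)) = (2 : ℂ) • q (q x) + (2 : ℂ) • q (p x)
            - (2 : ℂ) • q x := by
          calc (4 : ℂ) • q (q (p x)) = q ((4 : ℂ) • q (p x)) := (LinearMap.map_smul q _ _).symm
            _ = q ((2 : ℂ) • q x + (2 : ℂ) • p x - (2 : ℂ) • x) := by rw [h1]
            _ = (2 : ℂ) • q (q x) + (2 : ℂ) • q (p x) - (2 : ℂ) • q x := by
                rw [map_sub, map_add, LinearMap.map_smul, LinearMap.map_smul,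
                  LinearMap.map_smul]
        rw [hqq, hqq] at h2
        have hqp0 : q (p x) = 0 := by
          have h0 : (2 : ℂ) • q (p x) = 0 := by linear_combination (norm := module) h2
          rcases smul_eq_zero.mp h0 with h' | h'
          · norm_num at h'
          · exact h'
        rw [hqp0, smul_zero] at h1
        have h0 : (2 : ℂ) • (q x + p x - x) = 0 := by
          linear_combination (norm := module) -h1
        rcases smul_eq_zero.mp h0 with h' | h'
        · norm_num at h'
        · have := sub_eq_zero.mp h'
          linear_combination (norm := module) this
      · intro h
        have hqp0 : q (p x) = 0 := by
          have hpxe : p x = x - q x := by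
            linear_combination (norm := module) h
          rw [hpxe, map_sub, hqq, sub_self]
        rw [hqp0, smul_zero, neg_smul, one_smul]
        linear_combination (norm := module) -(2:ℂ) • h
    rw [key]
    constructor
    · intro h
      refine Submodule.mem_sup.mpr ⟨p x, ⟨?_, ?_⟩, q x, ⟨?_, ?_⟩, h⟩
      · exact (hmemA _).mpr (hpp x)
      · refine (horthB _).mpr ?_
        have h' : q (p x) + q (q x) = q x := by
          rw [← map_add, h]
        rw [hqq] at h'
        linear_combination (norm := module) h'
      · refine (horthA _).mpr ?_
        have h' : p (p x) + p (q x) = p x := by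
          rw [← map_add, h]
        rw [hpp] at h'
        linear_combination (norm := module) h'
      · exact (hmemB _).mpr (hqq x)
    · intro h
      obtain ⟨a, ⟨haA, haB⟩, b, ⟨hbA, hbB⟩, rfl⟩ := Submodule.mem_sup.mp h
      rw [map_add, map_add, (hmemA _).mp haA, (horthA _).mp hbA,
        (horthB _).mp haB, (hmemB _).mp hbB]
      module
  · ext x
    constructor
    · rintro ⟨h1, y, rfl⟩
      refine Submodule.mem_map.mpr ⟨y, LinearMap.mem_ker.mpr ?_, rfl⟩
      rw [toEL_mul]
      exact (mem_orth_range_iff A _).mp h1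
    · intro hx
      obtain ⟨y, hy, rfl⟩ := Submodule.mem_map.mp hx
      have hy' := LinearMap.mem_ker.mp hy
      rw [toEL_mul] at hy'
      exact ⟨(mem_orth_range_iff A _).mpr hy', ⟨y, rfl⟩⟩
end

section
/- (Effective spectral gap lemma) Let A, B be matrices with orthonormal columns, Π_A = AA†, Π_B = BB†, and U = (2Π_B − I)(2Π_A − I). For Θ ≥ 0, let P_Θ be the orthogonal projection onto the span of all eigenvectors of U with eigenvalue e^{iθ} where |θ| ≤ Θ. Then for any vector w with Π_A w = 0, we have ‖P_Θ Π_B w‖ ≤ (Θ/2)‖w‖. -/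
open Module.End in
lemma gap_key {n : ℕ} (T : Module.End ℂ (EuclideanSpace ℂ (Fin n))) (hT : T.IsSymmetric) (c : ℝ)
    (x : EuclideanSpace ℂ (Fin n))
    (hx : x ∈ ⨆ (μ : ℝ) (_ : μ ≤ c), Module.End.eigenspace T (μ : ℂ)) :
    (inner ℂ x (T x) : ℂ).re ≤ c * ‖x‖ ^ 2 := by
  rw [iSup_subtype'] at hx
  rw [Submodule.mem_iSup_iff_exists_finset] at hx
  obtain ⟨s, hx⟩ := hx
  induction s using Finset.induction_on generalizing x with
  | empty =>
    simp only [Finset.notMem_empty, iSup_false, iSup_bot, Submodule.mem_bot] at hx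
    subst hx
    simp
  | insert _ _ ha ih =>
    rename_i a s
    rw [Finset.iSup_insert] at hx
    obtain ⟨y, hy, z, hz, rfl⟩ := Submodule.mem_sup.mp hx
    -- orthogonality of y against eigenspaces in s
    have horth : ∀ b : {μ : ℝ // μ ≤ c}, b ∈ s → ∀ u ∈ eigenspace T (b.1 : ℂ),
        (inner ℂ y u : ℂ) = 0 := by
      intro b hb u hu
      have hne : ((a.1 : ℂ)) ≠ ((b.1 : ℂ)) := by
        intro h
        apply ha
        have : a = b := Subtype.ext (by exact_mod_cast h)
        rwa [this]
      exact hT.orthogonalFamily_eigenspaces hne ⟨y, hy⟩ ⟨u, hu⟩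
    have hle : (⨆ b ∈ s, eigenspace T ((b : {μ : ℝ // μ ≤ c}).1 : ℂ)) ≤ (ℂ ∙ y)ᗮ := by
      refine iSup₂_le fun b hb => fun u hu => ?_
      exact (Submodule.mem_orthogonal_singleton_iff_inner_right).mpr (horth b hb u hu)
    have hyz : (inner ℂ y z : ℂ) = 0 :=
      (Submodule.mem_orthogonal_singleton_iff_inner_right).mp (hle hz)
    have hTz_mem : T z ∈ ⨆ b ∈ s, eigenspace T ((b : {μ : ℝ // μ ≤ c}).1 : ℂ) := by
      have hmap : Submodule.map T (⨆ b ∈ s, eigenspace T ((b : {μ : ℝ // μ ≤ c}).1 : ℂ))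
          ≤ ⨆ b ∈ s, eigenspace T ((b : {μ : ℝ // μ ≤ c}).1 : ℂ) := by
        rw [Submodule.map_iSup]
        refine iSup_mono fun b => ?_
        rw [Submodule.map_iSup]
        refine iSup_mono fun hb => ?_
        rintro _ ⟨u, hu, rfl⟩
        have hu' : u ∈ eigenspace T ((b : {μ : ℝ // μ ≤ c}).1 : ℂ) := hu
        rw [mem_eigenspace_iff] at hu' ⊢
        rw [hu', map_smul, hu']
      exact hmap ⟨z, hz, rfl⟩
    have hyTz : (inner ℂ y (T z) : ℂ) = 0 :=
      (Submodule.mem_orthogonal_singleton_iff_inner_right).mp (hle hTz_mem)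
    have hTy : T y = (a.1 : ℂ) • y := mem_eigenspace_iff.mp hy
    have hzy : (inner ℂ z y : ℂ) = 0 := by
      rw [← inner_conj_symm, hyz, map_zero]
    have hzTy : (inner ℂ z (T y) : ℂ) = 0 := by
      rw [hTy, inner_smul_right, hzy, mul_zero]
    have hyTy : (inner ℂ y (T y) : ℂ).re = a.1 * ‖y‖ ^ 2 := by
      rw [hTy, inner_smul_right, inner_self_eq_norm_sq_to_K]
      simp [Complex.mul_re]
      left
      norm_cast
    have hnorm : ‖y + z‖ ^ 2 = ‖y‖ ^ 2 + ‖z‖ ^ 2 := by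
      rw [@norm_add_sq ℂ, hyz]
      simp
    have hexpand : (inner ℂ (y + z) (T (y + z)) : ℂ) =
        inner ℂ y (T y) + inner ℂ y (T z) + (inner ℂ z (T y) + inner ℂ z (T z)) := by
      rw [map_add, inner_add_left, inner_add_right, inner_add_right]
    rw [hexpand]
    simp only [hyTz, hzTy, add_zero, zero_add, Complex.add_re, hyTy, hnorm]
    have h1 : a.1 * ‖y‖ ^ 2 ≤ c * ‖y‖ ^ 2 :=
      mul_le_mul_of_nonneg_right a.2 (by positivity)
    have h2 := ih z hz
    nlinarith [h1, h2]

lemma scalar_id (θ : ℝ) :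
    (2 : ℂ) - Complex.exp (θ * Complex.I) - (Complex.exp (θ * Complex.I))⁻¹ =
      ((2 - 2 * Real.cos θ : ℝ) : ℂ) := by
  have he : Complex.exp (θ * Complex.I) + (Complex.exp (θ * Complex.I))⁻¹ =
      2 * Complex.cos (θ : ℂ) := by
    rw [← Complex.exp_neg, show -((θ : ℂ) * Complex.I) = ((-θ : ℝ) : ℂ) * Complex.I by
      push_cast; ring, Complex.exp_mul_I, Complex.exp_mul_I]
    simp [Complex.cos_neg, Complex.sin_neg]
    ring
  push_cast
  linear_combination -he

lemma eig_incl {n : ℕ} (U : Module.End ℂ (EuclideanSpace ℂ (Fin n)))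
    (hU : LinearMap.adjoint U * U = 1) (θ : ℝ) :
    Module.End.eigenspace U (Complex.exp (θ * Complex.I)) ≤
      Module.End.eigenspace (LinearMap.adjoint (1 - U) * (1 - U))
        ((2 - 2 * Real.cos θ : ℝ) : ℂ) := by
  intro x hx
  rw [Module.End.mem_eigenspace_iff] at hx ⊢
  set e := Complex.exp (θ * Complex.I) with he_def
  have he0 : e ≠ 0 := Complex.exp_ne_zero _
  have h : LinearMap.adjoint U (U x) = x := by
    rw [← Module.End.mul_apply, hU, Module.End.one_apply]
  rw [hx, map_smul] at h
  have hadj : LinearMap.adjoint U x = e⁻¹ • x := by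
    conv_rhs => rw [← h, smul_smul, inv_mul_cancel₀ he0, one_smul]
  have hadj1 : LinearMap.adjoint (1 - U : Module.End ℂ (EuclideanSpace ℂ (Fin n)))
      = 1 - LinearMap.adjoint U := by
    rw [map_sub, ← LinearMap.star_eq_adjoint, star_one]
  rw [Module.End.mul_apply, hadj1]
  have h1 : (1 - U : Module.End ℂ (EuclideanSpace ℂ (Fin n))) x = x - e • x := by
    simp [LinearMap.sub_apply, hx]
  rw [h1, ← scalar_id θ, ← he_def]
  simp only [LinearMap.sub_apply, Module.End.one_apply, map_sub, map_smul, hadj,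
    smul_sub, smul_smul, mul_inv_cancel₀ he0]
  module

set_option maxHeartbeats 2000000 in
open Matrix in
/-- Effective spectral gap lemma. -/
theorem stmt_13 (n k l : ℕ) (A : Matrix (Fin n) (Fin k) ℂ) (B : Matrix (Fin n) (Fin l) ℂ)
    (hA : Aᴴ * A = 1) (hB : Bᴴ * B = 1) (Θ : ℝ) (hΘ : 0 ≤ Θ)
    (S : Submodule ℂ (EuclideanSpace ℂ (Fin n)))
    (hS : S = ⨆ (θ : ℝ) (_ : |θ| ≤ Θ),
      Module.End.eigenspace
        (Matrix.toEuclideanLin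
          (((2 : ℂ) • (B * Bᴴ) - 1) * ((2 : ℂ) • (A * Aᴴ) - 1)))
        (Complex.exp (θ * Complex.I)))
    (w : EuclideanSpace ℂ (Fin n))
    (hw : Matrix.toEuclideanLin (A * Aᴴ) w = 0) :
    ‖(S.orthogonalProjection (Matrix.toEuclideanLin (B * Bᴴ) w) :
        EuclideanSpace ℂ (Fin n))‖ ≤ (Θ / 2) * ‖w‖ := by
  have hLmul : ∀ M N : Matrix (Fin n) (Fin n) ℂ,
      Matrix.toEuclideanLin (M * N) = Matrix.toEuclideanLin M * Matrix.toEuclideanLin N := by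
    intro M N
    apply LinearMap.ext
    intro x
    simp [Matrix.toEuclideanLin_apply, Matrix.mulVec_mulVec, Module.End.mul_apply]
  have hL1 : Matrix.toEuclideanLin (1 : Matrix (Fin n) (Fin n) ℂ) = 1 := by
    apply LinearMap.ext
    intro x
    simp [Matrix.toEuclideanLin_apply, Matrix.one_mulVec]
  set P : Module.End ℂ (EuclideanSpace ℂ (Fin n)) := Matrix.toEuclideanLin (A * Aᴴ) with hPdef
  set Q : Module.End ℂ (EuclideanSpace ℂ (Fin n)) := Matrix.toEuclideanLin (B * Bᴴ) with hQdef
  have hPstar : star P = P := by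
    rw [LinearMap.star_eq_adjoint, hPdef, ← Matrix.toEuclideanLin_conjTranspose_eq_adjoint,
      Matrix.conjTranspose_mul, Matrix.conjTranspose_conjTranspose]
  have hQstar : star Q = Q := by
    rw [LinearMap.star_eq_adjoint, hQdef, ← Matrix.toEuclideanLin_conjTranspose_eq_adjoint,
      Matrix.conjTranspose_mul, Matrix.conjTranspose_conjTranspose]
  have hP2 : P * P = P := by
    rw [hPdef, ← hLmul]
    congr 1
    rw [Matrix.mul_assoc, ← Matrix.mul_assoc Aᴴ, hA, Matrix.one_mul]
  have hQ2 : Q * Q = Q := by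
    rw [hQdef, ← hLmul]
    congr 1
    rw [Matrix.mul_assoc, ← Matrix.mul_assoc Bᴴ, hB, Matrix.one_mul]
  set RA : Module.End ℂ (EuclideanSpace ℂ (Fin n)) := (2 : ℂ) • P - 1 with hRAdef
  set RB : Module.End ℂ (EuclideanSpace ℂ (Fin n)) := (2 : ℂ) • Q - 1 with hRBdef
  have hRA2 : RA * RA = 1 := by
    rw [hRAdef]
    simp only [sub_mul, mul_sub, smul_mul_assoc, mul_smul_comm, hP2, mul_one, one_mul, smul_smul]
    module
  have hRB2 : RB * RB = 1 := by
    rw [hRBdef]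
    simp only [sub_mul, mul_sub, smul_mul_assoc, mul_smul_comm, hQ2, mul_one, one_mul, smul_smul]
    module
  have hRAstar : star RA = RA := by
    rw [hRAdef]
    simp [star_sub, star_smul, hPstar]
  have hRBstar : star RB = RB := by
    rw [hRBdef]
    simp [star_sub, star_smul, hQstar]
  set U : Module.End ℂ (EuclideanSpace ℂ (Fin n)) := RB * RA with hUdef2
  have hUmat : Matrix.toEuclideanLin
      (((2 : ℂ) • (B * Bᴴ) - 1) * ((2 : ℂ) • (A * Aᴴ) - 1)) = U := by
    rw [hLmul, hUdef2, hRBdef, hRAdef, hPdef, hQdef]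
    congr 1 <;> rw [map_sub, _root_.map_smul, hL1]
  have hU : LinearMap.adjoint U * U = 1 := by
    rw [← LinearMap.star_eq_adjoint, hUdef2, StarMul.star_mul, hRAstar, hRBstar,
      mul_assoc, ← mul_assoc RB, hRB2, one_mul, hRA2]
  have hU' : U * LinearMap.adjoint U = 1 := mul_eq_one_comm.mp hU
  set T : Module.End ℂ (EuclideanSpace ℂ (Fin n)) := LinearMap.adjoint (1 - U) * (1 - U) with hTdef
  have hTsym : T.IsSymmetric := LinearMap.isSymmetric_adjoint_mul_self _
  have hadj1 : LinearMap.adjoint (1 - U : Module.End ℂ (EuclideanSpace ℂ (Fin n))) = 1 - LinearMap.adjoint U := by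
    rw [map_sub, ← LinearMap.star_eq_adjoint, star_one]
  -- S is contained in the small-eigenvalue space of T
  have hSS' : S ≤ ⨆ (μ : ℝ) (_ : μ ≤ Θ ^ 2), Module.End.eigenspace T ((μ : ℝ) : ℂ) := by
    rw [hS]
    refine iSup₂_le fun θ hθ => ?_
    rw [hUmat]
    refine (eig_incl U hU θ).trans ?_
    have hbound : 2 - 2 * Real.cos θ ≤ Θ ^ 2 := by
      have h1 := Real.one_sub_sq_div_two_le_cos (x := θ)
      have h4 : θ ^ 2 ≤ Θ ^ 2 := by
        rw [abs_le] at hθ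
        nlinarith
      nlinarith
    exact le_iSup₂ (f := fun (μ : ℝ) (_ : μ ≤ Θ ^ 2) => Module.End.eigenspace T ((μ : ℝ) : ℂ))
      (2 - 2 * Real.cos θ) hbound
  set v : EuclideanSpace ℂ (Fin n) := Q w with hvdef
  set p : EuclideanSpace ℂ (Fin n) := (S.orthogonalProjection v : EuclideanSpace ℂ (Fin n)) with hpdef
  have hpmem : p ∈ S := (S.orthogonalProjection v).2
  have key : (inner ℂ p (T p) : ℂ).re ≤ Θ ^ 2 * ‖p‖ ^ 2 :=
    gap_key T hTsym (Θ ^ 2) p (hSS' hpmem)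
  have hcomm : (1 - U) * (1 - LinearMap.adjoint U) = T := by
    rw [hTdef, hadj1]
    simp only [mul_sub, sub_mul, mul_one, one_mul, hU, hU']
    abel
  set V' : Module.End ℂ (EuclideanSpace ℂ (Fin n)) := 1 - LinearMap.adjoint U with hV'def
  have hVp : ‖V' p‖ ^ 2 = (inner ℂ p (T p) : ℂ).re := by
    have h2 : V' p = LinearMap.adjoint ((1 : Module.End ℂ (EuclideanSpace ℂ (Fin n))) - U) p := by
      rw [hadj1]
    have h1 : (inner ℂ (V' p) (V' p) : ℂ) = inner ℂ p (T p) := by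
      conv_lhs => rw [h2]
      rw [LinearMap.adjoint_inner_left, ← Module.End.mul_apply, hadj1, hcomm]
    have h3 : (inner ℂ (V' p) (V' p) : ℂ) = ((‖V' p‖ : ℂ)) ^ 2 := inner_self_eq_norm_sq_to_K _
    have h4 : ((inner ℂ (V' p) (V' p) : ℂ)).re = ‖V' p‖ ^ 2 := by
      rw [h3]
      norm_cast
    rw [← h4, h1]
  have hVpnorm : ‖V' p‖ ≤ Θ * ‖p‖ := by
    have h4 : ‖V' p‖ ^ 2 ≤ (Θ * ‖p‖) ^ 2 := by
      rw [hVp, mul_pow]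
      exact key
    nlinarith [norm_nonneg (V' p), norm_nonneg p, mul_nonneg hΘ (norm_nonneg p)]
  -- (1-U) w = 2 • v
  have hVw : (1 - U : Module.End ℂ (EuclideanSpace ℂ (Fin n))) w = (2 : ℂ) • v := by
    have hRAw : RA w = -w := by
      rw [hRAdef]
      simp [LinearMap.sub_apply, hw]
    rw [LinearMap.sub_apply, Module.End.one_apply, hUdef2, Module.End.mul_apply, hRAw, hRBdef]
    simp only [LinearMap.sub_apply, Module.End.one_apply, LinearMap.smul_apply, map_neg,
      smul_neg, hvdef]
    module
  -- ‖p‖² = re ⟪p, v⟫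
  have hproj : ‖p‖ ^ 2 = (inner ℂ p v : ℂ).re := by
    have h0 : (inner ℂ (v - p) p : ℂ) = 0 := S.starProjection_inner_eq_zero v p hpmem
    have h1 : (inner ℂ p (v - p) : ℂ) = 0 := by
      rw [← inner_conj_symm, h0, map_zero]
    have h2 : (inner ℂ p v : ℂ) = inner ℂ p p + inner ℂ p (v - p) := by
      rw [← inner_add_right]
      congr 1
      abel
    rw [h2, h1, add_zero]
    have h5 := inner_self_eq_norm_sq (𝕜 := ℂ) p
    rw [← RCLike.re_eq_complex_re]
    exact h5.symm
  -- chain of inequalities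
  have hchain : ‖p‖ ^ 2 ≤ Θ / 2 * ‖w‖ * ‖p‖ := by
    have e1 : (inner ℂ p ((1 - U : Module.End ℂ (EuclideanSpace ℂ (Fin n))) w) : ℂ) = inner ℂ (V' p) w := by
      have : V' p = LinearMap.adjoint (1 - U : Module.End ℂ (EuclideanSpace ℂ (Fin n))) p := by rw [hadj1]
      rw [this, LinearMap.adjoint_inner_left]
    have e2 : (inner ℂ p ((1 - U : Module.End ℂ (EuclideanSpace ℂ (Fin n))) w) : ℂ) = 2 * inner ℂ p v := by
      rw [hVw, inner_smul_right]
    have e3 : (inner ℂ (V' p) w : ℂ).re ≤ ‖V' p‖ * ‖w‖ := by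
      have := re_inner_le_norm (𝕜 := ℂ) (V' p) w
      rwa [RCLike.re_eq_complex_re] at this
    have e4 : (2 : ℝ) * ‖p‖ ^ 2 ≤ Θ * ‖p‖ * ‖w‖ := by
      have : (2 : ℝ) * (inner ℂ p v : ℂ).re = (inner ℂ (V' p) w : ℂ).re := by
        rw [← e1, e2]
        simp [Complex.mul_re]
      rw [hproj, this]
      calc (inner ℂ (V' p) w : ℂ).re ≤ ‖V' p‖ * ‖w‖ := e3
        _ ≤ Θ * ‖p‖ * ‖w‖ := by
            apply mul_le_mul_of_nonneg_right hVpnorm (norm_nonneg w)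
    nlinarith
  by_cases hp0 : ‖p‖ = 0
  · rw [hpdef] at hp0
    rw [hpdef, hp0]
    positivity
  · have hppos : 0 < ‖p‖ := lt_of_le_of_ne (norm_nonneg p) (Ne.symm hp0)
    have := hchain
    nlinarith
end

section
/- Let x ∈ {0,1}^p with p odd, and construct the graph on vertices {v_{i,b} : i ∈ Z/p, b ∈ {0,1}} with edges {v_{i,b}, v_{i+1, b⊕x_i}}. Then this graph is bipartite if and only if the parity of x is odd. -/
/-- The 2-regular "parity" graph on `ZMod p × ZMod 2`: each vertex `(i,b)` is
joined to `(i+1, b + x i)` (indices mod `p`, values mod 2). -/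
def parityGraph (p : ℕ) (x : ZMod p → ZMod 2) : SimpleGraph (ZMod p × ZMod 2) where
  Adj a b := a ≠ b ∧
    ((b.1 = a.1 + 1 ∧ b.2 = a.2 + x a.1) ∨ (a.1 = b.1 + 1 ∧ a.2 = b.2 + x b.1))
  symm := by
    constructor
    rintro a b ⟨hne, h⟩
    exact ⟨hne.symm, h.symm⟩
  loopless := by
    constructor
    rintro a ⟨hne, -⟩
    exact hne rfl

lemma zmod2_ne_iff (a b : ZMod 2) : a ≠ b ↔ a = b + 1 := by revert a b; decide

lemma sum_range_cast (p : ℕ) [NeZero p] (f : ZMod p → ZMod 2) :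
    ∑ j ∈ Finset.range p, f (j : ZMod p) = ∑ i : ZMod p, f i := by
  refine Finset.sum_nbij' (fun j => (j : ZMod p)) (fun i => i.val) ?_ ?_ ?_ ?_ ?_
  · intro a _; exact Finset.mem_univ _
  · intro a _; exact Finset.mem_range.mpr (ZMod.val_lt a)
  · intro a ha; exact ZMod.val_cast_of_lt (Finset.mem_range.mp ha)
  · intro a _; exact ZMod.natCast_zmod_val a
  · intro a _; rfl

lemma natCast_zmod2_eq_one_iff (n : ℕ) : (n : ZMod 2) = 1 ↔ Odd n := by
  rw [Nat.odd_iff, ← ZMod.natCast_mod n 2]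
  rcases Nat.mod_two_eq_zero_or_one n with h | h <;> rw [h] <;> simp

lemma sum_val_cast (p : ℕ) [NeZero p] (x : ZMod p → ZMod 2) :
    ((∑ i : ZMod p, (x i).val : ℕ) : ZMod 2) = ∑ i : ZMod p, x i := by
  push_cast
  simp [ZMod.natCast_zmod_val]

theorem stmt_17 (p : ℕ) [NeZero p] (hp3 : 3 ≤ p) (hp : Odd p) (x : ZMod p → ZMod 2) :
    (parityGraph p x).Colorable 2 ↔ Odd (∑ i : ZMod p, (x i).val) := by
  haveI : Fact (1 < p) := ⟨by omega⟩
  constructor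
  · -- colorable → odd
    rintro ⟨C⟩
    by_contra hodd
    have hsum0 : (∑ i : ZMod p, x i) = 0 := by
      have := (natCast_zmod2_eq_one_iff (∑ i : ZMod p, (x i).val))
      rw [sum_val_cast] at this
      have h2 : (∑ i : ZMod p, x i) ≠ 1 := fun h => hodd (this.mp h)
      rcases ZMod.val_cast_of_lt (show 0 < 2 by norm_num) with _
      revert h2; generalize (∑ i : ZMod p, x i) = s; revert s; decide
    set c : ZMod p × ZMod 2 → ZMod 2 := fun v => ((C v).val : ZMod 2) with hc
    have cinj : ∀ a b : Fin 2, ((a.val : ZMod 2) = (b.val : ZMod 2)) → a = b := by decide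
    set v : ℕ → ZMod p × ZMod 2 :=
      fun n => ((n : ZMod p), ∑ j ∈ Finset.range n, x (j : ZMod p)) with hv
    have hadj : ∀ n, (parityGraph p x).Adj (v n) (v (n + 1)) := by
      intro n
      refine ⟨?_, Or.inl ⟨by simp only [hv]; exact Nat.cast_succ n, ?_⟩⟩
      · intro h
        have h1 : ((n : ZMod p)) = ((n + 1 : ℕ) : ZMod p) := congrArg Prod.fst h
        push_cast at h1
        have : (1 : ZMod p) = 0 := by linear_combination -h1
        exact one_ne_zero this
      · show (∑ j ∈ Finset.range (n+1), x (j : ZMod p))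
            = (∑ j ∈ Finset.range n, x (j : ZMod p)) + x (n : ZMod p)
        rw [Finset.sum_range_succ]
    have hstep : ∀ n, c (v (n + 1)) = c (v n) + 1 := by
      intro n
      have hne : c (v (n+1)) ≠ c (v n) := by
        intro h
        exact (C.valid (hadj n)).symm (cinj _ _ h)
      exact (zmod2_ne_iff _ _).mp hne
    have hiter : ∀ n, c (v n) = c (v 0) + (n : ZMod 2) := by
      intro n
      induction n with
      | zero => simp
      | succ n ih => rw [hstep n, ih]; push_cast; ring
    have hvp : v p = v 0 := by
      simp only [hv]
      rw [sum_range_cast p x, hsum0]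
      simp
    have := hiter p
    rw [hvp] at this
    have hp2 : ((p : ℕ) : ZMod 2) = 0 := by linear_combination -this
    rw [ZMod.natCast_eq_zero_iff] at hp2
    rw [Nat.odd_iff] at hp
    omega
  · -- odd → colorable
    intro hodd
    have hsum1 : (∑ i : ZMod p, x i) = 1 := by
      rw [← sum_val_cast, natCast_zmod2_eq_one_iff]; exact hodd
    set f : ZMod p → ZMod 2 :=
      fun i => (i.val : ZMod 2) + ∑ j ∈ Finset.range i.val, x (j : ZMod p) with hf
    have hfstep : ∀ i : ZMod p, f (i + 1) = f i + x i + 1 := by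
      intro i
      have hiv : i.val < p := ZMod.val_lt i
      have h1 : (1 : ZMod p).val = 1 := ZMod.val_one p
      rcases lt_or_eq_of_le (Nat.succ_le_of_lt hiv) with hlt | heq
      · have hval : (i + 1).val = i.val + 1 := by
          rw [ZMod.val_add_of_lt]; · rw [h1]
          · rw [h1]; omega
        simp only [hf, hval, Finset.sum_range_succ, ZMod.natCast_zmod_val]
        push_cast; ring
      · -- i.val + 1 = p, so i + 1 = 0
        have heq' : i.val + 1 = p := heq
        have h2 : (2 : ZMod 2) = 0 := rfl
        have hi1 : i + 1 = 0 := by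
          have : ((i.val + 1 : ℕ) : ZMod p) = 0 := by rw [heq']; exact ZMod.natCast_self p
          push_cast at this
          rwa [ZMod.natCast_zmod_val] at this
        have hS : (∑ j ∈ Finset.range i.val, x (j : ZMod p)) + x i = 1 := by
          have : (∑ j ∈ Finset.range (i.val + 1), x (j : ZMod p)) = 1 := by
            rw [heq', sum_range_cast p x, hsum1]
          rw [Finset.sum_range_succ, ZMod.natCast_zmod_val] at this
          exact this
        have hcast : ((i.val : ℕ) : ZMod 2) = 0 := by
          rw [ZMod.natCast_eq_zero_iff]
          rw [Nat.odd_iff] at hp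
          omega
        simp only [hf, hi1, ZMod.val_zero, Finset.range_zero, Finset.sum_empty,
          Nat.cast_zero, hcast]
        linear_combination -hS - h2
    set c : ZMod p × ZMod 2 → ZMod 2 := fun v => v.2 + f v.1 with hc
    have hproper : ∀ {a b}, (parityGraph p x).Adj a b → c a ≠ c b := by
      have h2 : (2 : ZMod 2) = 0 := rfl
      rintro a b ⟨hne, h | h⟩
      · rw [zmod2_ne_iff]
        simp only [hc, h.1, h.2, hfstep a.1]
        linear_combination (-1 - x a.1) * h2
      · rw [ne_comm, zmod2_ne_iff]
        simp only [hc, h.1, h.2, hfstep b.1]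
        linear_combination (-1 - x b.1) * h2
    have C : (parityGraph p x).Coloring (ZMod 2) := SimpleGraph.Coloring.mk c hproper
    have := C.colorable
    rwa [ZMod.card] at this
end
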